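/- Abstract Green's formula: for all f0 ∈ dom d and g1 ∈ dom δ, one has ⟨d f0, g1⟩_{H1} - ⟨f0, δ g1⟩_{H0} = ⟨γ0 f0, γ1 g1⟩_{G^{1/2}}, where the right-hand side is the inner product of G^{1/2} induced by the isomorphism (γ̂0)^{-1} : G^{1/2} → N0. -/

import Mathlib

open scoped InnerProductSpace
open ContinuousLinearMap

theorem statement_8
    {H0 H1 G H01 H11 : Type*}
    [NormedAddCommGroup H0] [InnerProductSpace ℂ H0] [CompleteSpace H0]
    [NormedAddCommGroup H1] [InnerProductSpace ℂ H1] [CompleteSpace H1]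
    [NormedAddCommGroup G] [InnerProductSpace ℂ G] [CompleteSpace G]
    [NormedAddCommGroup H01] [InnerProductSpace ℂ H01] [CompleteSpace H01]
    [NormedAddCommGroup H11] [InnerProductSpace ℂ H11] [CompleteSpace H11]
    (ι0 : H01 →L[ℂ] H0) (d : H01 →L[ℂ] H1) (γ0 : H01 →L[ℂ] G)
    (ι1 : H11 →L[ℂ] H1) (δ : H11 →L[ℂ] H0)
    (hι0 : Function.Injective ι0) (hι1 : Function.Injective ι1)
    (hgraph0 : ∀ f g : H01, ⟪f, g⟫_ℂ = ⟪ι0 f, ι0 g⟫_ℂ + ⟪d f, d g⟫_ℂ)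
    (hgraph1 : ∀ f g : H11, ⟪f, g⟫_ℂ = ⟪ι1 f, ι1 g⟫_ℂ + ⟪δ f, δ g⟫_ℂ)
    (hdom : Dense (Set.range ι0))
    (hker : Dense (ι0 '' {f : H01 | γ0 f = 0}))
    (hran : Dense (Set.range γ0))
    (hadj1 : ∀ (g : H11) (f : H01), γ0 f = 0 → ⟪d f, ι1 g⟫_ℂ = ⟪ι0 f, δ g⟫_ℂ)
    (hadj2 : ∀ (g1 : H1) (h0 : H0),
      (∀ f : H01, γ0 f = 0 → ⟪d f, g1⟫_ℂ = ⟪ι0 f, h0⟫_ℂ) →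
      ∃ g : H11, ι1 g = g1 ∧ δ g = h0)
    (γ1 : H11 →L[ℂ] G)
    (hγ1K : ∀ g : H11, (∀ f : H01, ⟪d f, ι1 g⟫_ℂ = ⟪ι0 f, δ g⟫_ℂ) → γ1 g = 0)
    (hγ1N : ∀ (g : H11) (n : H01),
      (∃ h : H01, ι0 h = δ g ∧ d h = -(ι1 g)) → ι0 n = δ g → γ1 g = -(γ0 n))
    : ∀ (f0 : H01) (g1 : H11) (n m : H01),
      (∃ g : H11, ι1 g = d n ∧ δ g = -(ι0 n)) → γ0 n = γ0 f0 →
      (∃ g : H11, ι1 g = d m ∧ δ g = -(ι0 m)) → γ0 m = γ1 g1 →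
      ⟪d f0, ι1 g1⟫_ℂ - ⟪ι0 f0, δ g1⟫_ℂ = ⟪n, m⟫_ℂ := by
  intro f0 g1 n m hnN hn hmN hm
  obtain ⟨gn, hgn1, hgn2⟩ := hnN
  obtain ⟨gm, hgm1, hgm2⟩ := hmN
  -- inner product identity for "harmonic" pairs
  have hinner : ∀ (a : H01) (b : H11), ι1 b = d a → δ b = -(ι0 a) →
      ∀ (a' : H01) (b' : H11), ι1 b' = d a' → δ b' = -(ι0 a') →
      ⟪a, a'⟫_ℂ = ⟪b, b'⟫_ℂ := by
    intro a b h1 h2 a' b' h1' h2'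
    rw [hgraph0 a a', hgraph1 b b', h1, h1', h2, h2', inner_neg_neg]
    ring
  -- the submodule N1
  set N1 : Submodule ℂ H11 :=
    { carrier := {g | ∃ u : H01, ι1 g = d u ∧ δ g = -(ι0 u)}
      add_mem' := by
        rintro a b ⟨ua, ha1, ha2⟩ ⟨ub, hb1, hb2⟩
        refine ⟨ua + ub, ?_, ?_⟩
        · simp [ha1, hb1]
        · simp [ha2, hb2]; abel
      zero_mem' := ⟨0, by simp, by simp⟩
      smul_mem' := by
        rintro c a ⟨ua, ha1, ha2⟩
        exact ⟨c • ua, by simp [ha1], by simp [ha2]⟩ } with hN1def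
  have hN1mem : ∀ g : H11, g ∈ N1 ↔ ∃ u : H01, ι1 g = d u ∧ δ g = -(ι0 u) :=
    fun g => Iff.rfl
  -- N1 is closed
  have hnormeq : ∀ (a : H01) (b : H11), ι1 b = d a → δ b = -(ι0 a) → ‖a‖ = ‖b‖ := by
    intro a b h1 h2
    have h := hinner a b h1 h2 a b h1 h2
    rw [inner_self_eq_norm_sq_to_K, inner_self_eq_norm_sq_to_K] at h
    have h' : ‖a‖ ^ 2 = ‖b‖ ^ 2 := by exact_mod_cast h
    nlinarith [norm_nonneg a, norm_nonneg b]
  have hclosed : IsClosed (N1 : Set H11) := by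
    rw [← isSeqClosed_iff_isClosed]
    intro x p hx hxp
    choose w hw1 hw2 using hx
    have hcw : CauchySeq w := by
      have hcx : CauchySeq x := hxp.cauchySeq
      rw [Metric.cauchySeq_iff] at hcx ⊢
      intro ε hε
      obtain ⟨N, hN⟩ := hcx ε hε
      refine ⟨N, fun j hj l hl => ?_⟩
      have heq : ‖w j - w l‖ = ‖x j - x l‖ := by
        refine hnormeq (w j - w l) (x j - x l) ?_ ?_
        · simp [hw1]
        · simp [hw2]; abel
      simpa [dist_eq_norm, heq] using hN j hj l hl
    obtain ⟨n0, hn0⟩ := cauchySeq_tendsto_of_complete hcw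
    refine ⟨n0, ?_, ?_⟩
    · refine tendsto_nhds_unique (f := fun j => ι1 (x j)) (l := Filter.atTop) ?_ ?_
      · exact (ι1.continuous.tendsto p).comp hxp
      · have : (fun j => ι1 (x j)) = fun j => d (w j) := funext fun j => hw1 j
        rw [this]
        exact (d.continuous.tendsto n0).comp hn0
    · refine tendsto_nhds_unique (f := fun j => δ (x j)) (l := Filter.atTop) ?_ ?_
      · exact (δ.continuous.tendsto p).comp hxp
      · have : (fun j => δ (x j)) = fun j => -(ι0 (w j)) := funext fun j => hw2 j
        rw [this]
        exact ((ι0.continuous.tendsto n0).comp hn0).neg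
  haveI : CompleteSpace N1 := hclosed.completeSpace_coe
  -- elements of N1ᗮ satisfy the adjointness relation for all of H01
  have horth : ∀ p : H11, p ∈ N1ᗮ → ∀ f : H01, ⟪d f, ι1 p⟫_ℂ = ⟪ι0 f, δ p⟫_ℂ := by
    intro p hp f
    set Z : Submodule ℂ H01 := LinearMap.ker (γ0 : H01 →ₗ[ℂ] G) with hZdef
    haveI : CompleteSpace Z := (isClosed_ker γ0).completeSpace_coe
    obtain ⟨h, hhZ, w, hwZ, hf⟩ := Z.exists_add_mem_mem_orthogonal f
    have hγ0h : γ0 h = 0 := hhZ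
    -- w is harmonic
    obtain ⟨gw, hgw1, hgw2⟩ := hadj2 (d w) (-(ι0 w)) (by
      intro h' hh'
      have h0 : ⟪h', w⟫_ℂ = 0 :=
        (Submodule.mem_orthogonal Z w).mp hwZ h' hh'
      rw [hgraph0 h' w] at h0
      rw [inner_neg_right]
      linear_combination h0)
    have hgwN : gw ∈ N1 := ⟨w, hgw1, hgw2⟩
    have h01 : ⟪d h, ι1 p⟫_ℂ = ⟪ι0 h, δ p⟫_ℂ := hadj1 p h hγ0h
    have h02 : ⟪gw, p⟫_ℂ = 0 := (Submodule.mem_orthogonal N1 p).mp hp gw hgwN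
    rw [hgraph1 gw p, hgw1, hgw2, inner_neg_left] at h02
    have hfe : f = h + w := hf
    rw [hfe]
    simp only [map_add, inner_add_left]
    linear_combination h01 + h02
  -- γ1 gm = γ0 m
  have hγ1gm : γ1 gm = γ0 m := by
    have := hγ1N gm (-m) ⟨-m, by simp [hgm2], by simp [hgm1]⟩ (by simp [hgm2])
    simpa using this
  -- decompose g1 - gm
  obtain ⟨q, hqN, p, hpN, hk⟩ := N1.exists_add_mem_mem_orthogonal (g1 - gm)
  obtain ⟨nq, hnq1, hnq2⟩ := hqN
  -- γ1 p = 0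
  have hγ1p : γ1 p = 0 := hγ1K p (horth p hpN)
  -- γ1 q = γ0 nq
  have hγ1q : γ1 q = γ0 nq := by
    have := hγ1N q (-nq) ⟨-nq, by simp [hnq2], by simp [hnq1]⟩ (by simp [hnq2])
    simpa using this
  -- γ0 nq = 0
  have hγ0nq : γ0 nq = 0 := by
    have h1 : γ1 (g1 - gm) = 0 := by
      rw [map_sub, hγ1gm, ← hm, sub_self]
    rw [hk, map_add, hγ1q, hγ1p, add_zero] at h1
    exact h1
  -- hence nq = 0 and q = 0
  have hnq0 : nq = 0 := by
    have h1 : ⟪nq, nq⟫_ℂ = 0 := by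
      have h2 : ⟪d nq, ι1 q⟫_ℂ = ⟪ι0 nq, δ q⟫_ℂ := hadj1 q nq hγ0nq
      rw [hnq1, hnq2, inner_neg_right] at h2
      rw [hgraph0 nq nq, ← hnq1, hnq1]
      linear_combination h2
    exact inner_self_eq_zero.mp h1
  have hq0 : q = 0 := by
    have h1 : ⟪q, q⟫_ℂ = 0 := by
      rw [hgraph1 q q, hnq1, hnq2, hnq0]
      simp
    exact inner_self_eq_zero.mp h1
  -- so g1 - gm ∈ N1ᗮ, hence ⟪gn, g1 - gm⟫ = 0
  have hkp : g1 - gm = p := by rw [hk, hq0, zero_add]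
  have hgnN : gn ∈ N1 := ⟨n, hgn1, hgn2⟩
  have hperp : ⟪gn, g1 - gm⟫_ℂ = 0 := by
    rw [hkp]
    exact (Submodule.mem_orthogonal N1 p).mp hpN gn hgnN
  -- main computation
  have hstep1 : ⟪d (f0 - n), ι1 g1⟫_ℂ = ⟪ι0 (f0 - n), δ g1⟫_ℂ :=
    hadj1 g1 (f0 - n) (by rw [map_sub, hn, sub_self])
  rw [map_sub, map_sub, inner_sub_left, inner_sub_left] at hstep1
  have hgn_g1 : ⟪gn, g1⟫_ℂ = ⟪ι1 gn, ι1 g1⟫_ℂ + ⟪δ gn, δ g1⟫_ℂ := hgraph1 gn g1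
  rw [hgn1, hgn2, inner_neg_left] at hgn_g1
  have hnm : ⟪n, m⟫_ℂ = ⟪gn, gm⟫_ℂ := hinner n gn hgn1 hgn2 m gm hgm1 hgm2
  rw [inner_sub_right] at hperp
  linear_combination hstep1 - hgn_g1 + hperp - hnm
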